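/- Let P be the transition matrix of the simple random walk on a finite connected graph G with spectral gap γ(P). Let α ∈ (0,1) and let (p_v)_{v∈V} ∈ [0,α)^V be a lazy vector. Let Q be the transition matrix of the walk that, when at v, stays put with probability p_v and otherwise takes a step according to P. Then γ(Q) ≥ (1−α)γ(P). -/

import Mathlib

open scoped Classical

noncomputable section

namespace Paper

variable {V : Type} [Fintype V]

/-- The degree of a vertex `v` in a simple graph `G`. -/
def deg (G : SimpleGraph V) (v : V) : ℕ := Nat.card {u | G.Adj v u}

/-- The transition matrix of the simple random walk on `G`. -/
def transMat (G : SimpleGraph V) : Matrix V V ℝ :=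
  fun v u => if G.Adj v u then (deg G v : ℝ)⁻¹ else 0

/-- Rayleigh quotients of `P` over unit functions orthogonal to constants in `L²(m)`;
its supremum is the second largest eigenvalue `λ₂`. -/
def rayleigh (P : Matrix V V ℝ) (m : V → ℝ) : Set ℝ :=
  {r | ∃ f : V → ℝ, (∑ v, m v * f v) = 0 ∧ (∑ v, m v * f v ^ 2) = 1 ∧
       r = ∑ v, m v * f v * (∑ u, P v u * f u)}

/-- The spectral gap `1 - λ₂` of `P` (reversible with respect to the weights `m`). -/
def matGap (P : Matrix V V ℝ) (m : V → ℝ) : ℝ := 1 - sSup (rayleigh P m)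

/-- The lazified transition matrix: at `v`, stay put with probability `p v` and
otherwise move according to `P`. -/
def lazyVecMat (P : Matrix V V ℝ) (p : V → ℝ) : Matrix V V ℝ :=
  fun v u => if u = v then p v + (1 - p v) * P v v else (1 - p v) * P v u

/-! ### Auxiliary lemmas -/

/-- edge weight -/
def ew (G : SimpleGraph V) (v u : V) : ℝ := if G.Adj v u then 1 else 0

omit [Fintype V] in
lemma ew_nonneg (G : SimpleGraph V) (v u : V) : 0 ≤ ew G v u := by
  unfold ew; split <;> norm_num

omit [Fintype V] in
lemma ew_symm (G : SimpleGraph V) (v u : V) : ew G v u = ew G u v := by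
  unfold ew; simp [G.adj_comm]

lemma sum_ew (G : SimpleGraph V) (v : V) : ∑ u, ew G v u = (deg G v : ℝ) := by
  unfold ew deg
  rw [Finset.sum_boole, Nat.card_eq_fintype_card]
  congr 1
  exact (Fintype.card_subtype _).symm

lemma deg_pos_of_adj (G : SimpleGraph V) {v u : V} (h : G.Adj v u) : 0 < deg G v := by
  unfold deg
  have : Nonempty {u | G.Adj v u} := ⟨⟨u, h⟩⟩
  exact Nat.card_pos

lemma deg_pos [Nontrivial V] (G : SimpleGraph V) (hconn : G.Connected) (v : V) :
    0 < deg G v := by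
  obtain ⟨u, hu⟩ := exists_ne v
  obtain ⟨w⟩ := hconn.preconnected v u
  cases w with
  | nil => exact absurd rfl hu
  | cons h _ => exact deg_pos_of_adj G h

lemma deg_mul_trans (G : SimpleGraph V) (v u : V) :
    (deg G v : ℝ) * transMat G v u = ew G v u := by
  unfold transMat ew
  split
  · rename_i h
    have h0 : (deg G v : ℝ) ≠ 0 := by
      exact_mod_cast (deg_pos_of_adj G h).ne'
    field_simp
  · ring

lemma rayleigh_sum (G : SimpleGraph V) (f : V → ℝ) :
    ∑ v, (deg G v : ℝ) * f v * (∑ u, transMat G v u * f u)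
      = ∑ v, ∑ u, ew G v u * (f v * f u) := by
  refine Finset.sum_congr rfl fun v _ => ?_
  rw [mul_comm ((deg G v : ℝ) * f v), Finset.sum_mul]
  refine Finset.sum_congr rfl fun u _ => ?_
  have h := deg_mul_trans G v u
  calc transMat G v u * f u * ((deg G v : ℝ) * f v)
      = ((deg G v : ℝ) * transMat G v u) * (f v * f u) := by ring
    _ = ew G v u * (f v * f u) := by rw [h]

lemma dirichlet_identity (G : SimpleGraph V) (f : V → ℝ) :
    ∑ v, ∑ u, ew G v u * (f v * f u)
      = ∑ v, (deg G v : ℝ) * f v ^ 2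
        - (1/2) * ∑ v, ∑ u, ew G v u * (f v - f u) ^ 2 := by
  have h1 : ∑ v, ∑ u, ew G v u * f v ^ 2 = ∑ v, (deg G v : ℝ) * f v ^ 2 := by
    refine Finset.sum_congr rfl fun v _ => ?_
    rw [← Finset.sum_mul, sum_ew]
  have h3 : ∑ v, ∑ u, ew G v u * f u ^ 2 = ∑ v, (deg G v : ℝ) * f v ^ 2 := by
    rw [Finset.sum_comm]
    refine Finset.sum_congr rfl fun u _ => ?_
    rw [← Finset.sum_mul]
    congr 1
    rw [← sum_ew G u]
    exact Finset.sum_congr rfl fun v _ => ew_symm G v u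
  have key : ∑ v, ∑ u, ew G v u * (f v - f u) ^ 2
      = ∑ v, ∑ u, ew G v u * f v ^ 2
        - 2 * ∑ v, ∑ u, ew G v u * (f v * f u)
        + ∑ v, ∑ u, ew G v u * f u ^ 2 := by
    rw [Finset.mul_sum, ← Finset.sum_sub_distrib, ← Finset.sum_add_distrib]
    refine Finset.sum_congr rfl fun v _ => ?_
    rw [Finset.mul_sum, ← Finset.sum_sub_distrib, ← Finset.sum_add_distrib]
    refine Finset.sum_congr rfl fun u _ => ?_
    ring
  rw [h1, h3] at key
  linarith

lemma dirichlet_nonneg (G : SimpleGraph V) (f : V → ℝ) :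
    0 ≤ ∑ v, ∑ u, ew G v u * (f v - f u) ^ 2 := by
  refine Finset.sum_nonneg fun v _ => Finset.sum_nonneg fun u _ => ?_
  exact mul_nonneg (ew_nonneg G v u) (sq_nonneg _)

/-- **Claim 2.8.** -/
theorem lazyVec_gap (G : SimpleGraph V) (hconn : G.Connected)
    (α : ℝ) (hα : α ∈ Set.Ioo (0 : ℝ) 1)
    (p : V → ℝ) (hp : ∀ v, p v ∈ Set.Ico (0 : ℝ) α) :
    (1 - α) * matGap (transMat G) (fun v => (deg G v : ℝ)) ≤
      matGap (lazyVecMat (transMat G) p) (fun v => (deg G v : ℝ) / (1 - p v)) := by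
  obtain ⟨hα0, hα1⟩ := hα
  have h1a : (0:ℝ) < 1 - α := by linarith
  have h1p : ∀ v, 0 < 1 - p v := fun v => by have := (hp v).2; linarith
  rcases subsingleton_or_nontrivial V with hV | hV
  · -- singleton case: degrees are zero, both Rayleigh sets are empty
    have hm : ∀ v : V, (deg G v : ℝ) = 0 := by
      intro v
      have : {u | G.Adj v u} = ∅ := by
        ext u
        simp only [Set.mem_setOf_eq, Set.mem_empty_iff_false, iff_false]
        intro h
        exact G.irrefl (Subsingleton.elim u v ▸ h)
      simp [deg, this]
    have hPe : rayleigh (transMat G) (fun v => (deg G v : ℝ)) = ∅ := by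
      rw [Set.eq_empty_iff_forall_notMem]
      rintro r ⟨f, -, hnorm, -⟩
      simp only [hm, zero_mul, Finset.sum_const_zero] at hnorm
      norm_num at hnorm
    have hQe : rayleigh (lazyVecMat (transMat G) p) (fun v => (deg G v : ℝ) / (1 - p v)) = ∅ := by
      rw [Set.eq_empty_iff_forall_notMem]
      rintro r ⟨f, -, hnorm, -⟩
      simp only [hm, zero_div, zero_mul, Finset.sum_const_zero] at hnorm
      norm_num at hnorm
    rw [matGap, matGap, hPe, hQe, Real.sSup_empty]
    nlinarith
  · -- nontrivial case
    have hd : ∀ v, 0 < deg G v := deg_pos G hconn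
    have hd' : ∀ v, (0:ℝ) < (deg G v : ℝ) := fun v => by exact_mod_cast hd v
    have hmQpos : ∀ v, 0 < (deg G v : ℝ) / (1 - p v) :=
      fun v => div_pos (hd' v) (h1p v)
    have hmPQ : ∀ v, (deg G v : ℝ) = (1 - p v) * ((deg G v : ℝ) / (1 - p v)) := by
      intro v; rw [mul_comm, div_mul_cancel₀ _ (h1p v).ne']
    -- every Rayleigh quotient of P is at most 1
    have hSP_le : ∀ r ∈ rayleigh (transMat G) (fun v => (deg G v : ℝ)), r ≤ 1 := by
      rintro r ⟨f, -, hnorm, rfl⟩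
      simp only at hnorm ⊢
      rw [rayleigh_sum, dirichlet_identity, hnorm]
      have := dirichlet_nonneg G f
      linarith
    have hbdd : BddAbove (rayleigh (transMat G) (fun v => (deg G v : ℝ))) :=
      ⟨1, hSP_le⟩
    -- the key per-element bound on Rayleigh quotients of Q
    have key : ∀ r ∈ rayleigh (lazyVecMat (transMat G) p) (fun v => (deg G v : ℝ) / (1 - p v)),
        r ≤ 1 - (1 - α) * (1 - sSup (rayleigh (transMat G) (fun v => (deg G v : ℝ)))) := by
      rintro r ⟨f, hmean, hnorm, rfl⟩
      simp only at hmean hnorm ⊢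
      -- the Dirichlet energy of f
      set D : ℝ := (1/2) * ∑ v, ∑ u, ew G v u * (f v - f u) ^ 2 with hD
      have hDnn : 0 ≤ D := by
        have := dirichlet_nonneg G f
        rw [hD]; linarith
      -- rows of Q
      have hrow : ∀ v, (∑ u, lazyVecMat (transMat G) p v u * f u)
          = p v * f v + (1 - p v) * ∑ u, transMat G v u * f u := by
        intro v
        have hvv : transMat G v v = 0 := by simp [transMat]
        have he : ∀ u, lazyVecMat (transMat G) p v u * f u
            = (if u = v then p v * f v else 0) + (1 - p v) * (transMat G v u * f u) := by
          intro u
          unfold lazyVecMat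
          split
          · rename_i hh; subst hh; rw [hvv]; ring
          · ring
        rw [Finset.sum_congr rfl fun u _ => he u, Finset.sum_add_distrib,
          Finset.sum_ite_eq' Finset.univ v (fun _ => p v * f v), ← Finset.mul_sum]
        simp
      -- value of the Rayleigh quotient of Q at f
      have hr : (∑ v, (deg G v : ℝ) / (1 - p v) * f v * (∑ u, lazyVecMat (transMat G) p v u * f u))
          = 1 - D := by
        have e1 : ∀ v, (deg G v : ℝ) / (1 - p v) * f v * (∑ u, lazyVecMat (transMat G) p v u * f u)
            = ((deg G v : ℝ) / (1 - p v) * f v ^ 2 - (deg G v : ℝ) * f v ^ 2)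
              + (deg G v : ℝ) * f v * (∑ u, transMat G v u * f u) := by
          intro v
          rw [hrow v]
          have h2 := hmPQ v
          have h3 : (1 - p v) ≠ 0 := (h1p v).ne'
          field_simp
          ring
        rw [Finset.sum_congr rfl fun v _ => e1 v, Finset.sum_add_distrib,
          Finset.sum_sub_distrib, hnorm, rayleigh_sum, dirichlet_identity, ← hD]
        ring
      rw [hr]
      -- centering
      set M : ℝ := ∑ v, (deg G v : ℝ) with hM
      have hMpos : 0 < M := Finset.sum_pos (fun v _ => hd' v) Finset.univ_nonempty
      set T : ℝ := ∑ v, (deg G v : ℝ) * f v with hT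
      set c : ℝ := T / M with hc
      set g : V → ℝ := fun v => f v - c with hg
      have hgmean : ∑ v, (deg G v : ℝ) * g v = 0 := by
        have e : ∀ v, (deg G v : ℝ) * g v = (deg G v : ℝ) * f v - c * (deg G v : ℝ) := by
          intro v; rw [hg]; ring
        rw [Finset.sum_congr rfl fun v _ => e v, Finset.sum_sub_distrib, ← Finset.mul_sum,
          ← hT, ← hM, hc]
        field_simp
        ring
      -- Q-variance of g is at least 1
      have hQg : 1 ≤ ∑ v, (deg G v : ℝ) / (1 - p v) * g v ^ 2 := by
        have e : ∀ v, (deg G v : ℝ) / (1 - p v) * g v ^ 2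
            = (deg G v : ℝ) / (1 - p v) * f v ^ 2
              - (2*c) * ((deg G v : ℝ) / (1 - p v) * f v)
              + c ^ 2 * ((deg G v : ℝ) / (1 - p v)) := by
          intro v; rw [hg]; ring
        rw [Finset.sum_congr rfl fun v _ => e v, Finset.sum_add_distrib,
          Finset.sum_sub_distrib, ← Finset.mul_sum, ← Finset.mul_sum, hmean, hnorm]
        have : 0 ≤ c ^ 2 * ∑ v, (deg G v : ℝ) / (1 - p v) := by
          apply mul_nonneg (sq_nonneg _)
          exact Finset.sum_nonneg fun v _ => (hmQpos v).le
        linarith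
      -- P-variance of g is at least 1 - α
      set S : ℝ := ∑ v, (deg G v : ℝ) * g v ^ 2 with hS
      have hSge : 1 - α ≤ S := by
        have e : ∀ v, (1 - α) * ((deg G v : ℝ) / (1 - p v) * g v ^ 2)
            ≤ (deg G v : ℝ) * g v ^ 2 := by
          intro v
          have hnn : 0 ≤ (deg G v : ℝ) / (1 - p v) * g v ^ 2 :=
            mul_nonneg (hmQpos v).le (sq_nonneg _)
          calc (1 - α) * ((deg G v : ℝ) / (1 - p v) * g v ^ 2)
              ≤ (1 - p v) * ((deg G v : ℝ) / (1 - p v) * g v ^ 2) :=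
                mul_le_mul_of_nonneg_right (by linarith [(hp v).2]) hnn
            _ = (deg G v : ℝ) * g v ^ 2 := by
                rw [← mul_assoc, ← hmPQ v]
        calc 1 - α = (1 - α) * 1 := by ring
          _ ≤ (1 - α) * ∑ v, (deg G v : ℝ) / (1 - p v) * g v ^ 2 :=
              mul_le_mul_of_nonneg_left hQg h1a.le
          _ = ∑ v, (1 - α) * ((deg G v : ℝ) / (1 - p v) * g v ^ 2) := Finset.mul_sum _ _ _
          _ ≤ ∑ v, (deg G v : ℝ) * g v ^ 2 := Finset.sum_le_sum fun v _ => e v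
      have hSpos : 0 < S := lt_of_lt_of_le h1a hSge
      -- normalized centered function
      set s : ℝ := Real.sqrt S with hs
      have hs2 : s ^ 2 = S := Real.sq_sqrt hSpos.le
      have hspos : 0 < s := Real.sqrt_pos.mpr hSpos
      set ff : V → ℝ := fun v => g v / s with hff
      have hffmean : ∑ v, (deg G v : ℝ) * ff v = 0 := by
        have e : ∀ v, (deg G v : ℝ) * ff v = ((deg G v : ℝ) * g v) * s⁻¹ := by
          intro v; rw [hff]; ring
        rw [Finset.sum_congr rfl fun v _ => e v, ← Finset.sum_mul, hgmean, zero_mul]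
      have hffnorm : ∑ v, (deg G v : ℝ) * ff v ^ 2 = 1 := by
        have e : ∀ v, (deg G v : ℝ) * ff v ^ 2 = ((deg G v : ℝ) * g v ^ 2) * (s ^ 2)⁻¹ := by
          intro v; rw [hff]; rw [div_pow]; ring
        rw [Finset.sum_congr rfl fun v _ => e v, ← Finset.sum_mul, ← hS, hs2]
        field_simp
      have hffval : (∑ v, (deg G v : ℝ) * ff v * (∑ u, transMat G v u * ff u))
          = 1 - D / S := by
        rw [rayleigh_sum, dirichlet_identity, hffnorm]
        have e : ∀ v u, ew G v u * (ff v - ff u) ^ 2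
            = (ew G v u * (f v - f u) ^ 2) * (s ^ 2)⁻¹ := by
          intro v u
          rw [hff, hg]
          have : f v - c - (f u - c) = f v - f u := by ring
          rw [div_sub_div_same, this, div_pow]
          ring
        rw [Finset.sum_congr rfl fun v _ => Finset.sum_congr rfl fun u _ => e v u]
        simp only [← Finset.sum_mul]
        rw [hs2, hD]
        field_simp
      have hmem : 1 - D / S ∈ rayleigh (transMat G) (fun v => (deg G v : ℝ)) :=
        ⟨ff, hffmean, hffnorm, hffval.symm⟩
      have hrP_le : 1 - D / S ≤ sSup (rayleigh (transMat G) (fun v => (deg G v : ℝ))) :=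
        le_csSup hbdd hmem
      have hcanc : D / S * S = D := div_mul_cancel₀ _ hSpos.ne'
      have hDSnn : 0 ≤ D / S := div_nonneg hDnn hSpos.le
      nlinarith [hrP_le, hSge, hDSnn, hcanc, h1a]
    -- nonemptiness of the Rayleigh set of Q
    obtain ⟨a, b, hab⟩ := exists_pair_ne V
    set mQ : V → ℝ := fun v => (deg G v : ℝ) / (1 - p v) with hmQ
    set K : ℝ := mQ a * mQ b ^ 2 + mQ b * mQ a ^ 2 with hK
    have hKpos : 0 < K := by
      have := hmQpos a; have := hmQpos b
      simp only [hK, hmQ]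
      positivity
    set t : ℝ := Real.sqrt K with ht
    have ht2 : t ^ 2 = K := Real.sq_sqrt hKpos.le
    have htpos : 0 < t := Real.sqrt_pos.mpr hKpos
    set f0 : V → ℝ := fun v => ((if v = a then mQ b else 0) - (if v = b then mQ a else 0)) / t
      with hf0
    have hmean0 : ∑ v, mQ v * f0 v = 0 := by
      have e : ∀ v, mQ v * f0 v
          = ((if v = a then mQ v * mQ b else 0) - (if v = b then mQ v * mQ a else 0)) * t⁻¹ := by
        intro v; simp only [hf0]; split_ifs <;> ring
      rw [Finset.sum_congr rfl fun v _ => e v, ← Finset.sum_mul, Finset.sum_sub_distrib]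
      simp only [Finset.sum_ite_eq', Finset.mem_univ, if_true]
      ring
    have hnorm0 : ∑ v, mQ v * f0 v ^ 2 = 1 := by
      have e : ∀ v, mQ v * f0 v ^ 2
          = ((if v = a then mQ v * mQ b ^ 2 else 0) + (if v = b then mQ v * mQ a ^ 2 else 0))
            * (t ^ 2)⁻¹ := by
        intro v
        simp only [hf0]
        split_ifs with h1 h2
        · exact absurd (h1.symm.trans h2) hab
        · ring
        · ring
        · ring
      rw [Finset.sum_congr rfl fun v _ => e v, ← Finset.sum_mul, Finset.sum_add_distrib]
      simp only [Finset.sum_ite_eq', Finset.mem_univ, if_true]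
      rw [ht2, ← hK]
      exact mul_inv_cancel₀ hKpos.ne'
    have hQne : (rayleigh (lazyVecMat (transMat G) p) mQ).Nonempty :=
      ⟨_, f0, hmean0, hnorm0, rfl⟩
    have hsup : sSup (rayleigh (lazyVecMat (transMat G) p) mQ)
        ≤ 1 - (1 - α) * (1 - sSup (rayleigh (transMat G) (fun v => (deg G v : ℝ)))) :=
      csSup_le hQne key
    rw [matGap, matGap]
    linarith

end Paper
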